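/- Let C be the k×k lower-triangular matrix with c_{i,i}=1 and c_{i,j} = binom(2i, i−j) − binom(2i, i−j−1) for j<i. Then C is the Jacobian matrix at the point (1,...,1) of the map ψ_k^{−1}:(0,∞)^k→ℝ^k sending (z_1,...,z_k) to the moment vector (m_1,...,m_k) defined by the Skibinsky recursion; that is, ∂m_i/∂z_r evaluated at z_1=⋯=z_k=1 equals binom(2i, i−r) − binom(2i, i−r−1) for 1≤r≤i, and equals 0 for r>i. -/

import Mathlib

/-- Binomial coefficient `n` choose `k` with the convention that it vanishes for `k < 0`,
taking values in `ℤ`. -/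
def ichoose (n : ℕ) (k : ℤ) : ℤ := if k < 0 then 0 else n.choose k.toNat

namespace Stmt17Aux

lemma ichoose_neg (n : ℕ) {k : ℤ} (h : k < 0) : ichoose n k = 0 := if_pos h

lemma ichoose_pascal (n : ℕ) (k : ℤ) :
    ichoose (n + 1) k = ichoose n k + ichoose n (k - 1) := by
  unfold ichoose
  rcases lt_trichotomy k 0 with h | h | h
  · rw [if_pos h, if_pos h, if_pos (by linarith)]; ring
  · subst h; norm_num
  · rw [if_neg (by omega), if_neg (by omega), if_neg (by omega)]
    have hk : k.toNat = (k - 1).toNat + 1 := by omega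
    rw [hk, Nat.choose_succ_succ]
    push_cast; ring

lemma ichoose_symm (n : ℕ) (a : ℤ) (ha : 0 ≤ a) : ichoose n a = ichoose n (n - a) := by
  unfold ichoose
  rcases le_or_gt a n with h | h
  · rw [if_neg (by omega), if_neg (by omega)]
    have h1 : ((n : ℤ) - a).toNat = n - a.toNat := by omega
    rw [h1, Nat.choose_symm (by omega)]
  · rw [if_neg (by omega), if_pos (by omega), Nat.choose_eq_zero_of_lt (by omega)]
    simp

def Av (i j : ℕ) : ℤ :=
  if j < i then 0 else ichoose (i + j) (i : ℤ) - ichoose (i + j) ((i : ℤ) - 1)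

def Dv (r i j : ℕ) : ℤ :=
  if j < i then 0 else
    ichoose (i + j) (min ((i : ℤ) - 1) ((j : ℤ) - r)) - ichoose (i + j) ((i : ℤ) - r - 1)

lemma Av_rec (i j : ℕ) (h : i ≤ j) :
    Av (i + 1) (j + 1) = Av (i + 1) j + Av i (j + 1) := by
  rcases eq_or_lt_of_le h with rfl | hij
  · have h0 : Av (i + 1) i = 0 := if_pos (by omega)
    rw [h0]
    unfold Av
    rw [if_neg (by omega), if_neg (by omega)]
    rw [show (i+1) + (i+1) = i + i + 1 + 1 from by ring, show i + (i+1) = i + i + 1 from by ring]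
    have p : ∀ k : ℤ, ichoose (i + i + 1 + 1) k = ichoose (i + i + 1) k + ichoose (i + i + 1) (k - 1) :=
      fun k => ichoose_pascal (i + i + 1) k
    simp only [p]
    have hs : ichoose (i + i + 1) ((i : ℤ) + 1) = ichoose (i + i + 1) (i : ℤ) := by
      rw [ichoose_symm (i + i + 1) ((i : ℤ) + 1) (by omega)]
      congr 1; push_cast; ring
    push_cast
    rw [show ((i:ℤ) + 1 - 1) = (i : ℤ) from by ring, hs]
    ring
  · unfold Av
    rw [if_neg (by omega), if_neg (by omega), if_neg (by omega)]
    rw [show (i+1) + (j+1) = i + j + 1 + 1 from by ring, show (i+1) + j = i + j + 1 from by ring,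
        show i + (j+1) = i + j + 1 from by ring]
    have p : ∀ k : ℤ, ichoose (i + j + 1 + 1) k = ichoose (i + j + 1) k + ichoose (i + j + 1) (k - 1) :=
      fun k => ichoose_pascal (i + j + 1) k
    simp only [p]
    push_cast
    ring_nf

lemma Dv_rec (r i j : ℕ) (hr : 1 ≤ r) (h : i ≤ j) :
    Dv r (i + 1) (j + 1) =
      Dv r (i + 1) j + Dv r i (j + 1) + (if j - i + 1 = r then Av i (j + 1) else 0) := by
  rcases eq_or_lt_of_le h with rfl | hij
  · -- diagonal : j = i
    have h0 : Dv r (i + 1) i = 0 := if_pos (by omega)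
    rw [h0]
    have p : ∀ k : ℤ, ichoose (i + i + 1 + 1) k = ichoose (i + i + 1) k + ichoose (i + i + 1) (k - 1) :=
      fun k => ichoose_pascal (i + i + 1) k
    by_cases hc : i - i + 1 = r
    · -- r = 1, source on diagonal
      have hr1 : r = 1 := by omega
      subst hr1
      rw [if_pos hc]
      unfold Dv Av
      rw [if_neg (by omega), if_neg (by omega), if_neg (by omega)]
      rw [show (i+1) + (i+1) = i + i + 1 + 1 from by ring, show i + (i+1) = i + i + 1 from by ring]
      simp only [p]
      push_cast
      rw [show ((i:ℤ) + 1 - 1) ⊓ ((i:ℤ) + 1 - 1) = (i:ℤ) from by omega]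
      rw [show ((i:ℤ) - 1) ⊓ ((i:ℤ) + 1 - 1) = (i:ℤ) - 1 from by omega]
      ring_nf
    · rw [if_neg hc]
      have hr2 : 2 ≤ r := by omega
      unfold Dv
      rw [if_neg (by omega), if_neg (by omega)]
      rw [show (i+1) + (i+1) = i + i + 1 + 1 from by ring, show i + (i+1) = i + i + 1 from by ring]
      simp only [p]
      push_cast
      rw [show ((i:ℤ) + 1 - 1) ⊓ ((i:ℤ) + 1 - r) = (i:ℤ) + 1 - r from by omega]
      rw [show ((i:ℤ) - 1) ⊓ ((i:ℤ) + 1 - r) = (i:ℤ) + 1 - r from by omega]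
      ring_nf
  · -- j > i
    unfold Dv Av
    rw [if_neg (by omega), if_neg (by omega), if_neg (by omega)]
    rw [show (i+1) + (j+1) = i + j + 1 + 1 from by ring, show (i+1) + j = i + j + 1 from by ring,
        show i + (j+1) = i + j + 1 from by ring]
    have p : ∀ k : ℤ, ichoose (i + j + 1 + 1) k = ichoose (i + j + 1) k + ichoose (i + j + 1) (k - 1) :=
      fun k => ichoose_pascal (i + j + 1) k
    simp only [p]
    rcases lt_trichotomy (j + 1) (i + r) with hreg | hreg | hreg
    · -- below source
      rw [if_neg (by omega)]
      push_cast
      rw [show ((i:ℤ) + 1 - 1) ⊓ ((j:ℤ) + 1 - ↑r) = (j:ℤ) + 1 - r from by omega]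
      rw [show ((i:ℤ) + 1 - 1) ⊓ ((j:ℤ) - ↑r) = (j:ℤ) - r from by omega]
      rw [show ((i:ℤ) - 1) ⊓ ((j:ℤ) + 1 - ↑r) = (j:ℤ) + 1 - r from by omega]
      ring_nf
    · -- on source line
      rw [if_pos (by omega)]
      rw [if_neg (show ¬ (j + 1 < i) from by omega)]
      push_cast
      rw [show ((i:ℤ) + 1 - 1) ⊓ ((j:ℤ) + 1 - ↑r) = (i:ℤ) from by omega]
      rw [show ((i:ℤ) + 1 - 1) ⊓ ((j:ℤ) - ↑r) = (i:ℤ) - 1 from by omega]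
      rw [show ((i:ℤ) - 1) ⊓ ((j:ℤ) + 1 - ↑r) = (i:ℤ) - 1 from by omega]
      rw [show ((r:ℤ)) = (j:ℤ) + 1 - i from by omega]
      ring_nf
    · -- above source
      rw [if_neg (by omega)]
      push_cast
      rw [show ((i:ℤ) + 1 - 1) ⊓ ((j:ℤ) + 1 - ↑r) = (i:ℤ) from by omega]
      rw [show ((i:ℤ) + 1 - 1) ⊓ ((j:ℤ) - ↑r) = (i:ℤ) from by omega]
      rw [show ((i:ℤ) - 1) ⊓ ((j:ℤ) + 1 - ↑r) = (i:ℤ) - 1 from by omega]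
      ring_nf

end Stmt17Aux

lemma Stmt17Aux.Dv_diag (r i : ℕ) (hr : 1 ≤ r) :
    Stmt17Aux.Dv r i i = ichoose (2 * i) ((i : ℤ) - r) - ichoose (2 * i) ((i : ℤ) - r - 1) := by
  unfold Stmt17Aux.Dv
  rw [if_neg (lt_irrefl i), show i + i = 2 * i from (two_mul i).symm,
      show min ((i:ℤ) - 1) ((i:ℤ) - r) = (i:ℤ) - r from by omega]

/-- Let `g` be the Skibinsky array with recursion variables `z`
(`g i j z = 0` for `i > j`, `g 0 j z = 1`,
`g i j z = g i (j-1) z + z (j-i+1) * g (i-1) j z` for `1 ≤ i ≤ j`) and `m i = g i i` the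
`i`-th moment of the map `ψ⁻¹`. Then the Jacobian matrix of `ψ⁻¹` at the point `(1,…,1)` is the
lower-triangular matrix `C` with entries
`∂ m_i / ∂ z_r (1,…,1) = binom (2i) (i-r) - binom (2i) (i-r-1)` for `1 ≤ r ≤ i`
and `0` for `r > i` (where `binom (n) (k) = 0` for `k < 0`, so the formula covers both cases). -/
theorem stmt_17 (g : ℕ → ℕ → (ℕ → ℝ) → ℝ)
    (h_zero : ∀ i j z, j < i → g i j z = 0)
    (h_top : ∀ j z, g 0 j z = 1)
    (h_rec : ∀ i j : ℕ, ∀ z : ℕ → ℝ, 1 ≤ i → i ≤ j →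
      g i j z = g i (j - 1) z + z (j - i + 1) * g (i - 1) j z) :
    ∀ i r : ℕ, 1 ≤ r →
      HasDerivAt (fun t => g i i (Function.update (fun _ => (1 : ℝ)) r t))
        ((ichoose (2 * i) ((i : ℤ) - r) - ichoose (2 * i) ((i : ℤ) - r - 1) : ℤ) : ℝ) 1 := by
  intro I r hr
  open Stmt17Aux in
  have hones : Function.update (fun _ => (1:ℝ)) r 1 = fun _ => 1 :=
    Function.update_eq_self r (fun _ => (1:ℝ))
  have basez : ∀ i j, j < i →
      g i j (fun _ => 1) = ((Av i j : ℤ) : ℝ) ∧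
      HasDerivAt (fun t => g i j (Function.update (fun _ => (1:ℝ)) r t)) ((Dv r i j : ℤ) : ℝ) 1 := by
    intro i j hj
    constructor
    · rw [h_zero i j _ hj]; simp [Av, if_pos hj]
    · have hf : (fun t : ℝ => g i j (Function.update (fun _ => (1:ℝ)) r t)) = fun _ => 0 :=
        funext fun t => h_zero _ _ _ hj
      rw [hf]
      have : Dv r i j = 0 := if_pos hj
      rw [this]
      simpa using hasDerivAt_const (1:ℝ) (0:ℝ)
  have base0 : ∀ j,
      g 0 j (fun _ => 1) = ((Av 0 j : ℤ) : ℝ) ∧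
      HasDerivAt (fun t => g 0 j (Function.update (fun _ => (1:ℝ)) r t)) ((Dv r 0 j : ℤ) : ℝ) 1 := by
    intro j
    have hAv : Av 0 j = 1 := by
      unfold Av ichoose
      rw [if_neg (by omega)]
      norm_num
    have hDv : Dv r 0 j = 0 := by
      unfold Dv
      rw [if_neg (by omega)]
      rw [ichoose_neg _ (show min ((0:ℕ) - 1 : ℤ) ((j:ℤ) - r) < 0 from
        lt_of_le_of_lt (min_le_left _ _) (by norm_num))]
      rw [ichoose_neg _ (show ((0:ℕ) : ℤ) - r - 1 < 0 from by omega)]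
      ring
    constructor
    · rw [h_top j _, hAv]; norm_num
    · have hf : (fun t : ℝ => g 0 j (Function.update (fun _ => (1:ℝ)) r t)) = fun _ => 1 :=
        funext fun t => h_top _ _
      rw [hf, hDv]
      simpa using hasDerivAt_const (1:ℝ) (1:ℝ)
  have main : ∀ n i j, i + j ≤ n →
      g i j (fun _ => 1) = ((Av i j : ℤ) : ℝ) ∧
      HasDerivAt (fun t => g i j (Function.update (fun _ => (1:ℝ)) r t)) ((Dv r i j : ℤ) : ℝ) 1 := by
    intro n
    induction n with
    | zero =>
      intro i j hij
      have hi : i = 0 := by omega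
      subst hi
      exact base0 j
    | succ n ih =>
      intro i j hij
      rcases lt_or_ge j i with hji | hij2
      · exact basez i j hji
      cases i with
      | zero => exact base0 j
      | succ i =>
        cases j with
        | zero => exact absurd hij2 (by omega)
        | succ j =>
          have hle : i ≤ j := by omega
          have h1 := ih (i+1) j (by omega)
          have h2 := ih i (j+1) (by omega)
          have hrec : ∀ z : ℕ → ℝ,
              g (i+1) (j+1) z = g (i+1) j z + z (j - i + 1) * g i (j+1) z := by
            intro z
            have h := h_rec (i+1) (j+1) z (by omega) (by omega)
            have e1 : (j + 1) - 1 = j := rfl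
            have e2 : (i + 1) - 1 = i := rfl
            have e3 : (j + 1) - (i + 1) + 1 = j - i + 1 := by omega
            rw [e1, e2, e3] at h
            exact h
          constructor
          · rw [hrec (fun _ => 1), h1.1, h2.1]
            have hA : ((Av (i+1) (j+1) : ℤ) : ℝ) = ((Av (i+1) j : ℤ) : ℝ) + ((Av i (j+1) : ℤ) : ℝ) := by
              rw [← Int.cast_add, Av_rec i j hle]
            rw [hA]; ring
          · have hfun : (fun t : ℝ => g (i+1) (j+1) (Function.update (fun _ => (1:ℝ)) r t))
                = fun t => g (i+1) j (Function.update (fun _ => (1:ℝ)) r t)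
                    + (Function.update (fun _ => (1:ℝ)) r t) (j - i + 1)
                      * g i (j+1) (Function.update (fun _ => (1:ℝ)) r t) :=
              funext fun t => hrec _
            rw [hfun]
            have hz : HasDerivAt (fun t : ℝ => Function.update (fun _ => (1:ℝ)) r t (j - i + 1))
                (if j - i + 1 = r then (1:ℝ) else 0) 1 := by
              by_cases hc : j - i + 1 = r
              · rw [if_pos hc]
                subst hc
                simp only [Function.update_self]
                exact hasDerivAt_id' 1
              · rw [if_neg hc]
                simp only [Function.update_of_ne hc]
                exact hasDerivAt_const _ _
            have hd := h1.2.add (hz.mul h2.2)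
            convert hd using 1
            case e'_4 => rfl
            case e'_5 => rfl
            case e'_8 => rfl
            rw [hones]
            simp only [h2.1]
            have hD : Dv r (i+1) (j+1)
                = Dv r (i+1) j + Dv r i (j+1) + (if j - i + 1 = r then Av i (j+1) else 0) :=
              Dv_rec r i j hr hle
            rw [hD]
            push_cast [apply_ite (fun z : ℤ => (z : ℝ))]
            by_cases hc : j - i + 1 = r
            · rw [if_pos hc, if_pos hc]; ring
            · rw [if_neg hc, if_neg hc]; ring
  have hfin := (main (I + I) I I le_rfl).2
  have : ((Dv r I I : ℤ) : ℝ)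
      = ((ichoose (2 * I) ((I : ℤ) - r) - ichoose (2 * I) ((I : ℤ) - r - 1) : ℤ) : ℝ) := by
    rw [Stmt17Aux.Dv_diag r I hr]
  rwa [this] at hfin
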